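/- Let B be an integral domain containing ℚ and D : B → B a nonzero locally nilpotent derivation with kernel A. Then D has a preslice: there exists t ∈ B with D(t) ≠ 0 and D²(t) = 0. Moreover, setting α = D(t) ∈ A, the localization B_α equals A_α[t], a polynomial ring in the variable t over A_α. -/

import Mathlib

set_option linter.unusedSectionVars false

section Helpers
variable {B : Type*} [CommRing B] [IsDomain B] [Algebra ℚ B] (D : Derivation ℤ B B)

lemma my_Drat (q : ℚ) : D (algebraMap ℚ B q) = 0 := by
  haveI : CharZero B := charZero_of_injective_algebraMap (algebraMap ℚ B).injective
  have h : ((q.den : B)) * algebraMap ℚ B q = ((q.num : B)) := by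
    rw [show ((q.den : B)) = algebraMap ℚ B (q.den : ℚ) by simp,
      ← map_mul, show ((q.den:ℚ) * q) = (q.num : ℚ) by
        rw [mul_comm]; exact_mod_cast q.mul_den_eq_num]
    simp
  have h2 := congrArg D h
  rw [Derivation.leibniz, D.map_intCast, D.map_natCast, smul_eq_mul, smul_eq_mul,
    mul_zero, add_zero] at h2
  exact (mul_eq_zero.1 h2).resolve_left (Nat.cast_ne_zero.2 q.den_nz)

lemma my_Dqsmul (q : ℚ) (x : B) : D (q • x) = q • D x := by
  rw [Algebra.smul_def, Algebra.smul_def, Derivation.leibniz, my_Drat, smul_eq_mul,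
    smul_eq_mul, mul_zero, add_zero]

lemma my_iter_qsmul (q : ℚ) (x : B) (k : ℕ) : (⇑D)^[k] (q • x) = q • (⇑D)^[k] x := by
  induction k generalizing x with
  | zero => rfl
  | succ k ih => rw [Function.iterate_succ_apply, Function.iterate_succ_apply, my_Dqsmul, ih]

lemma my_iter_stable {b : B} {k : ℕ} (h : (⇑D)^[k] b = 0) {l : ℕ} (hkl : k ≤ l) :
    (⇑D)^[l] b = 0 := by
  obtain ⟨j, rfl⟩ := Nat.exists_eq_add_of_le hkl
  rw [add_comm, Function.iterate_add_apply, h]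
  exact Function.iterate_fixed D.map_zero j

/-- divided power coefficients -/
noncomputable def mycdiv (n : ℕ) (b : B) : B := ((n.factorial : ℚ))⁻¹ • ((⇑D)^[n] b)

lemma mycdiv_zero (b : B) : mycdiv D 0 b = b := by simp [mycdiv]

lemma mycdiv_eq_zero {n : ℕ} {b : B} (h : (⇑D)^[n] b = 0) : mycdiv D n b = 0 := by
  simp [mycdiv, h]

lemma my_D_mycdiv (n : ℕ) (b : B) :
    D (mycdiv D n b) = ((n+1 : ℕ) : B) * mycdiv D (n+1) b := by
  unfold mycdiv
  rw [my_Dqsmul, ← Function.iterate_succ_apply' D n b,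
    show ((n+1 : ℕ) : B) * (((n+1).factorial : ℚ))⁻¹ • ((⇑D)^[n+1] b)
      = ((n+1 : ℕ)) • (((n+1).factorial : ℚ))⁻¹ • ((⇑D)^[n+1] b) from (nsmul_eq_mul _ _).symm,
    ← Nat.cast_smul_eq_nsmul ℚ, smul_smul]
  congr 1
  have h1 : ((n+1 : ℕ) : ℚ) ≠ 0 := by positivity
  have h2 : ((n.factorial : ℕ) : ℚ) ≠ 0 := by positivity
  rw [Nat.factorial_succ]
  push_cast
  field_simp

lemma my_iter_mycdiv (k n : ℕ) (b : B) :
    (⇑D)^[k] (mycdiv D n b) = ((n.factorial : ℚ))⁻¹ • ((⇑D)^[k + n] b) := by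
  unfold mycdiv
  rw [my_iter_qsmul, ← Function.iterate_add_apply]

noncomputable def myG (t : B) (m : ℕ) (b : B) (n : ℕ) : B :=
  (-1:B)^(n+1) * ((n:ℕ):B) * mycdiv D n b * t^(n-1) * (D t)^(m+1-n)

lemma myG_step (t : B) (ht2 : D (D t) = 0) (m n : ℕ) (b : B) (hn : n ≤ m) :
    D ((-1:B)^n * mycdiv D n b * t^n * (D t)^(m-n)) = myG D t m b (n+1) - myG D t m b n := by
  have e1 : D ((-1:B)^n) = 0 := by
    rw [Derivation.leibniz_pow]
    simp
  have e4 : D ((D t)^(m-n)) = 0 := by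
    rw [Derivation.leibniz_pow, ht2]
    simp
  have e2 : D (t^n) = (n:B) * (t^(n-1) * (D t)) := by
    rw [Derivation.leibniz_pow, smul_eq_mul, nsmul_eq_mul]
  simp only [Derivation.leibniz, e1, e2, e4, my_D_mycdiv, smul_eq_mul, mul_zero, zero_mul,
    add_zero, zero_add, myG]
  have s1 : m + 1 - (n+1) = m - n := by omega
  have s2 : n + 1 - 1 = n := by omega
  have s3 : m + 1 - n = (m - n) + 1 := by omega
  rw [s1, s2, s3]
  push_cast
  ring

lemma my_key (t : B) (ht2 : D (D t) = 0) (m : ℕ) (b : B) (hb : (⇑D)^[m+1] b = 0) :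
    D (∑ n ∈ Finset.range (m+1), (-1:B)^n * mycdiv D n b * t^n * (D t)^(m-n)) = 0 := by
  rw [map_sum,
    Finset.sum_congr rfl (fun n hn =>
      myG_step D t ht2 m n b (Nat.lt_succ_iff.1 (Finset.mem_range.1 hn))),
    Finset.sum_range_sub (myG D t m b)]
  simp [myG, mycdiv_eq_zero D hb]

lemma my_trans (t : B) (ht : D t ≠ 0) (N : ℕ) :
    ∀ (c : ℕ → B), (∀ i, D (c i) = 0) →
      (∑ i ∈ Finset.range N, c i * t ^ i) = 0 → ∀ i < N, c i = 0 := by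
  haveI : CharZero B := charZero_of_injective_algebraMap (algebraMap ℚ B).injective
  induction N with
  | zero => exact fun c _ _ i hi => (Nat.not_lt_zero i hi).elim
  | succ N ih =>
    intro c hc hsum
    have h1 : ∑ i ∈ Finset.range (N+1), (D t) * (((i:ℕ):B) * c i * t^(i-1)) = 0 := by
      have hd := congrArg D hsum
      rw [map_zero, map_sum] at hd
      rw [← hd]
      refine Finset.sum_congr rfl fun i _ => ?_
      simp only [Derivation.leibniz, Derivation.leibniz_pow, hc i, smul_eq_mul, nsmul_eq_mul,
        mul_zero, add_zero]
      ring
    rw [← Finset.mul_sum] at h1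
    have h2 : ∑ i ∈ Finset.range (N+1), ((i:ℕ):B) * c i * t^(i-1) = 0 :=
      (mul_eq_zero.1 h1).resolve_left ht
    rw [Finset.sum_range_succ'] at h2
    simp only [Nat.cast_zero, zero_mul, add_zero, Nat.add_sub_cancel] at h2
    have h3 := ih (fun i => ((i+1:ℕ):B) * c (i+1))
      (fun i => by simp [Derivation.leibniz, hc (i+1)])
      (by rw [← h2])
    have hc1 : ∀ j < N, c (j+1) = 0 := fun j hj =>
      (mul_eq_zero.1 (h3 j hj)).resolve_left (Nat.cast_ne_zero.2 (Nat.succ_ne_zero j))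
    have hc0 : c 0 = 0 := by
      rw [Finset.sum_range_succ',
        Finset.sum_eq_zero (fun i hi => by rw [hc1 i (Finset.mem_range.1 hi), zero_mul]),
        zero_add, pow_zero, mul_one] at hsum
      exact hsum
    intro i hi
    cases i with
    | zero => exact hc0
    | succ j => exact hc1 j (by omega)

lemma my_preslice (hD : D ≠ 0) (hln : ∀ b : B, ∃ n : ℕ, (⇑D)^[n] b = 0) :
    ∃ t : B, D t ≠ 0 ∧ D (D t) = 0 := by
  classical
  have hb : ∃ b, D b ≠ 0 := by
    by_contra h
    push_neg at h
    exact hD (by ext b; simp [h b])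
  obtain ⟨b, hb⟩ := hb
  have hb0 : b ≠ 0 := fun h => hb (by rw [h, map_zero])
  have hex := hln b
  have h2 : 2 ≤ Nat.find hex := by
    rw [Nat.le_find_iff]
    intro n hn
    interval_cases n
    · simpa using hb0
    · simpa using hb
  obtain ⟨k, hk⟩ : ∃ k, Nat.find hex = k + 2 := ⟨Nat.find hex - 2, by omega⟩
  refine ⟨(⇑D)^[k] b, ?_, ?_⟩
  · have hmin := Nat.find_min hex (show k + 1 < Nat.find hex by omega)
    rw [← Function.iterate_succ_apply' D k b]
    exact hmin
  · have hspec := Nat.find_spec hex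
    rw [hk] at hspec
    rw [← Function.iterate_succ_apply' D k b, ← Function.iterate_succ_apply' D (k+1) b]
    exact hspec

end Helpers


/-- a nonzero locally nilpotent derivation on a domain containing `ℚ`
has a preslice `t`; and for `α = D t`, one has `B_α = A_α[t]`, a polynomial ring over
`A_α` where `A = ker D`. -/
theorem lnd_preslice (B : Type*) [CommRing B] [IsDomain B] [Algebra ℚ B]
    (D : Derivation ℤ B B) (hD : D ≠ 0)
    (hln : ∀ b : B, ∃ n : ℕ, (⇑D)^[n] b = 0) :
    (∃ t : B, D t ≠ 0 ∧ D (D t) = 0) ∧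
    (∀ t : B, D t ≠ 0 → D (D t) = 0 →
      ∀ (A' : Subring (Localization.Away (D t))),
        A' = Subring.closure
          ((algebraMap B (Localization.Away (D t)) '' {b : B | D b = 0}) ∪
            {IsLocalization.Away.invSelf (S := Localization.Away (D t)) (D t)}) →
        Algebra.adjoin A' {algebraMap B (Localization.Away (D t)) t} = ⊤ ∧
        Transcendental A' (algebraMap B (Localization.Away (D t)) t)) := by
  haveI : CharZero B := charZero_of_injective_algebraMap (algebraMap ℚ B).injective
  refine ⟨my_preslice D hD hln, ?_⟩
  intro t ht ht2 A' hA'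
  set L := Localization.Away (D t) with hL
  set φ := algebraMap B L with hφ
  set u := IsLocalization.Away.invSelf (S := L) (D t) with hu_def
  have hu : φ (D t) * u = 1 := IsLocalization.Away.mul_invSelf (D t)
  have hinj : Function.Injective φ :=
    IsLocalization.injective _ (powers_le_nonZeroDivisors_of_noZeroDivisors ht)
  haveI : IsDomain L :=
    IsLocalization.isDomain_of_le_nonZeroDivisors L
      (powers_le_nonZeroDivisors_of_noZeroDivisors ht)
  have hupow : ∀ j : ℕ, φ (D t) ^ j * u ^ j = 1 := fun j => by
    rw [← mul_pow, hu, one_pow]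
  have hAmem : ∀ {a : B}, D a = 0 → φ a ∈ A' := fun {a} ha => by
    rw [hA']; exact Subring.subset_closure (Or.inl ⟨a, ha, rfl⟩)
  have humem : u ∈ A' := by rw [hA']; exact Subring.subset_closure (Or.inr rfl)
  set R := Algebra.adjoin A' {φ t} with hR
  have hA'R : ∀ {x : L}, x ∈ A' → x ∈ R := fun {x} hx => by
    have h : algebraMap A' L ⟨x, hx⟩ = x := rfl
    exact h ▸ R.algebraMap_mem ⟨x, hx⟩
  have htR : φ t ∈ R := Algebra.subset_adjoin rfl
  have hDtpow : ∀ j : ℕ, D ((D t) ^ j) = 0 := fun j => by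
    rw [Derivation.leibniz_pow, ht2]; simp
  have hmain : ∀ (m : ℕ) (b : B), (⇑D)^[m] b = 0 → φ b ∈ R := by
    intro m
    induction m with
    | zero =>
      intro b hb
      have hb0 : b = 0 := by simpa using hb
      rw [hb0, map_zero]
      exact R.zero_mem
    | succ m ih =>
      intro b hb
      have hc : D (∑ n ∈ Finset.range (m+1),
          (-1:B)^n * mycdiv D n b * t^n * (D t)^(m-n)) = 0 := my_key D t ht2 m b hb
      have hid : φ (∑ n ∈ Finset.range (m+1),
            (-1:B)^n * mycdiv D n b * t^n * (D t)^(m-n)) * u^m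
          = ∑ n ∈ Finset.range (m+1),
            (-1:L)^n * φ (mycdiv D n b) * (φ t)^n * u^n := by
        rw [map_sum, Finset.sum_mul]
        refine Finset.sum_congr rfl fun n hn => ?_
        have hnm : n ≤ m := Nat.lt_succ_iff.1 (Finset.mem_range.1 hn)
        have key : φ (D t)^(m-n) * u^m = u^n := by
          have h1 : u^m = u^(m-n) * u^n := by rw [← pow_add, Nat.sub_add_cancel hnm]
          rw [h1, ← mul_assoc, hupow (m-n), one_mul]
        rw [map_mul, map_mul, map_mul, map_pow, map_pow, map_pow, map_neg, map_one,
          mul_assoc, key]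
      have hsplit := Finset.sum_range_succ'
        (fun n => (-1:L)^n * φ (mycdiv D n b) * (φ t)^n * u^n) m
      have hf0 : (-1:L)^0 * φ (mycdiv D 0 b) * (φ t)^0 * u^0 = φ b := by
        simp [mycdiv_zero]
      have hφb : φ b = φ (∑ n ∈ Finset.range (m+1),
            (-1:B)^n * mycdiv D n b * t^n * (D t)^(m-n)) * u^m
          - ∑ i ∈ Finset.range m,
            (-1:L)^(i+1) * φ (mycdiv D (i+1) b) * (φ t)^(i+1) * u^(i+1) := by
        rw [hid, hsplit]
        rw [hf0]
        ring
      rw [hφb]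
      refine sub_mem ?_ ?_
      · exact hA'R (A'.mul_mem (hAmem hc) (A'.pow_mem humem m))
      · refine sum_mem fun i _ => ?_
        have hmem : φ (mycdiv D (i+1) b) ∈ R := by
          apply ih
          rw [my_iter_mycdiv, my_iter_stable D hb (show m+1 ≤ m + (i+1) by omega), smul_zero]
        exact mul_mem (mul_mem (mul_mem (pow_mem (neg_mem (one_mem R)) _) hmem)
          (pow_mem htR _)) (pow_mem (hA'R humem) _)
  constructor
  · rw [eq_top_iff]
    rintro x -
    obtain ⟨⟨b, s⟩, hx⟩ := IsLocalization.surj (Submonoid.powers (D t)) x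
    obtain ⟨n, hn⟩ := s.2
    obtain ⟨m, hm⟩ := hln b
    have hxe : x = φ b * u^n := by
      have hn2 : (D t)^n = (s : B) := by simpa using hn
      have hx' : x * φ ((s : B)) = φ b := hx
      have h1 : x * (φ (D t)^n * u^n) = φ b * u^n := by
        rw [← mul_assoc, ← map_pow, hn2, hx']
      rwa [hupow n, mul_one] at h1
    rw [hxe]
    exact mul_mem (hmain m b hm) (pow_mem (hA'R humem) n)
  · have hchar : ∀ x ∈ A', ∃ (a : B) (j : ℕ), D a = 0 ∧ x = φ a * u ^ j := by
      intro x hx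
      rw [hA'] at hx
      induction hx using Subring.closure_induction with
      | mem y hy =>
        rcases hy with ⟨a, ha, rfl⟩ | rfl
        · exact ⟨a, 0, ha, by simp⟩
        · exact ⟨1, 1, Derivation.map_one_eq_zero D, by simp⟩
      | zero => exact ⟨0, 0, map_zero D, by simp⟩
      | one => exact ⟨1, 0, Derivation.map_one_eq_zero D, by simp⟩
      | add x y hx hy ihx ihy =>
        obtain ⟨a, j, ha, rfl⟩ := ihx
        obtain ⟨a', j', ha', rfl⟩ := ihy
        refine ⟨a * (D t)^j' + a' * (D t)^j, j + j', ?_, ?_⟩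
        · simp [Derivation.leibniz, ha, ha', hDtpow]
        · rw [map_add, map_mul, map_mul, map_pow, map_pow]
          linear_combination (-(φ a * u^j)) * hupow j' + (-(φ a' * u^j')) * hupow j
      | neg x hx ihx =>
        obtain ⟨a, j, ha, rfl⟩ := ihx
        exact ⟨-a, j, by simp [ha], by rw [map_neg, neg_mul]⟩
      | mul x y hx hy ihx ihy =>
        obtain ⟨a, j, ha, rfl⟩ := ihx
        obtain ⟨a', j', ha', rfl⟩ := ihy
        refine ⟨a * a', j + j', by simp [Derivation.leibniz, ha, ha'], ?_⟩
        rw [map_mul, pow_add]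
        ring
    rintro ⟨p, hp0, hpev⟩
    choose a k hak using fun i => hchar ((p.coeff i : L)) (p.coeff i).2
    set K := (Finset.range (p.natDegree + 1)).sup k with hK
    have hc0 : ∀ i, D (a i * (D t) ^ (K - k i)) = 0 := fun i => by
      simp [Derivation.leibniz, (hak i).1, hDtpow]
    have hsum : ∑ i ∈ Finset.range (p.natDegree + 1),
        (a i * (D t)^(K - k i)) * t ^ i = 0 := by
      apply hinj
      rw [map_zero, map_sum]
      have h0 : φ (D t) ^ K * Polynomial.aeval (φ t) p = 0 := by rw [hpev, mul_zero]
      rw [Polynomial.aeval_eq_sum_range, Finset.mul_sum] at h0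
      rw [← h0]
      refine Finset.sum_congr rfl fun i hi => ?_
      have hik : k i ≤ K := Finset.le_sup hi
      have hKs : φ (D t)^K = φ (D t)^(K - k i) * φ (D t)^(k i) := by
        rw [← pow_add, Nat.sub_add_cancel hik]
      rw [map_mul, map_mul, map_pow, map_pow, Algebra.smul_def,
        show (algebraMap A' L (p.coeff i)) = ((p.coeff i : L)) from rfl, (hak i).2, hKs]
      linear_combination (-(φ (a i) * φ (D t)^(K - k i) * (φ t)^i)) * hupow (k i)
    have hz := my_trans D t ht (p.natDegree + 1) _ hc0 hsum
    have hcoeff : ∀ i < p.natDegree + 1, p.coeff i = 0 := fun i hi => by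
      have h1 := hz i hi
      have h2 : a i = 0 := by
        rcases mul_eq_zero.1 h1 with h | h
        · exact h
        · exact absurd h (pow_ne_zero _ ht)
      have h3 := (hak i).2
      rw [h2, map_zero, zero_mul] at h3
      exact ZeroMemClass.coe_eq_zero.mp h3
    apply hp0
    apply Polynomial.ext
    intro i
    rw [Polynomial.coeff_zero]
    by_cases hi : i < p.natDegree + 1
    · exact hcoeff i hi
    · exact Polynomial.coeff_eq_zero_of_natDegree_lt (by omega)
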